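/- Let α ∈ (0,1), T > 0, n ∈ ℕ with n ≥ 1, τ = T/n and t_k = kτ. Let f : [0,T] → ℝ be continuously differentiable. Then for every k ∈ {1,…,n}, the trapezoidal approximation of the Riemann–Liouville fractional integral satisfies | (1/Γ(α)) ∫_0^{t_k} f(s)(t_k−s)^{α−1} ds − (τ^α/Γ(α+1)) Σ_{j=0}^{k−1} b_j^α · (f(t_{k−j}) + f(t_{k−j−1}))/2 | ≤ (τ t_k^α / Γ(α+1)) · sup_{s∈[0,T]} |f′(s)|, where b_j^α = (j+1)^α − j^α. -/

import Mathlib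

open Set Finset MeasureTheory intervalIntegral

/-- Trapezoidal approximation error for the Riemann–Liouville fractional integral
of order `α ∈ (0,1)` with base point `0`, on the uniform grid `t k = k * τ`,
`τ = T / n`, for a continuously differentiable `f` on `[0, T]`. -/
theorem trapezoidal_riemann_liouville_error
    (α T : ℝ) (hα : α ∈ Set.Ioo (0 : ℝ) 1) (hT : 0 < T)
    (n : ℕ) (hn : 1 ≤ n)
    (f f' : ℝ → ℝ)
    (hf : ∀ s ∈ Set.Icc (0 : ℝ) T, HasDerivWithinAt f (f' s) (Set.Icc (0 : ℝ) T) s)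
    (hf' : ContinuousOn f' (Set.Icc (0 : ℝ) T))
    (τ : ℝ) (hτ : τ = T / n)
    (t : ℕ → ℝ) (ht : ∀ i, t i = (i : ℝ) * τ)
    (b : ℕ → ℝ) (hb : ∀ j, b j = ((j : ℝ) + 1) ^ α - (j : ℝ) ^ α)
    (k : ℕ) (hk1 : 1 ≤ k) (hkn : k ≤ n) :
    |(1 / Real.Gamma α) * (∫ s in (0 : ℝ)..t k, f s * (t k - s) ^ (α - 1)) -
        (τ ^ α / Real.Gamma (α + 1)) *
          ∑ j ∈ Finset.range k, b j * ((f (t (k - j)) + f (t (k - j - 1))) / 2)|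
      ≤ (τ * (t k) ^ α / Real.Gamma (α + 1)) *
          sSup ((fun s => |f' s|) '' Set.Icc (0 : ℝ) T) := by
  obtain ⟨hα0, hα1⟩ := hα
  have hn0 : (0:ℝ) < (n:ℝ) := by exact_mod_cast hn
  have hτpos : 0 < τ := by rw [hτ]; positivity
  have hTn : (n:ℝ) * τ = T := by rw [hτ]; field_simp
  have htval : ∀ i : ℕ, t i = (i:ℝ) * τ := ht
  have htmem : ∀ i : ℕ, i ≤ n → t i ∈ Set.Icc (0:ℝ) T := by
    intro i hi
    rw [htval]
    constructor
    · positivity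
    · rw [← hTn]
      have : (i:ℝ) ≤ (n:ℝ) := by exact_mod_cast hi
      nlinarith
  have hΓ : 0 < Real.Gamma α := Real.Gamma_pos_of_pos hα0
  have hΓ1 : Real.Gamma (α+1) = α * Real.Gamma α := Real.Gamma_add_one hα0.ne'
  set M := sSup ((fun s => |f' s|) '' Set.Icc (0:ℝ) T) with hM
  have hbdd : BddAbove ((fun s => |f' s|) '' Set.Icc (0:ℝ) T) :=
    (isCompact_Icc.image_of_continuousOn hf'.abs).bddAbove
  have hMle : ∀ s ∈ Set.Icc (0:ℝ) T, |f' s| ≤ M := fun s hs => le_csSup hbdd ⟨s, hs, rfl⟩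
  have hM0 : 0 ≤ M := le_trans (abs_nonneg _) (hMle 0 ⟨le_refl 0, hT.le⟩)
  have hLip : ∀ x ∈ Set.Icc (0:ℝ) T, ∀ y ∈ Set.Icc (0:ℝ) T, |f y - f x| ≤ M * |y - x| := by
    intro x hx y hy
    have := Convex.norm_image_sub_le_of_norm_hasDerivWithin_le hf
      (fun s hs => by simpa [Real.norm_eq_abs] using hMle s hs) (convex_Icc 0 T) hx hy
    simpa [Real.norm_eq_abs] using this
  have hfc : ContinuousOn f (Set.Icc (0:ℝ) T) := fun s hs => (hf s hs).continuousWithinAt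
  have ht0 : t 0 = 0 := by rw [htval]; simp
  have hcpos : 0 < t k := by
    rw [htval]
    have : (0:ℝ) < (k:ℝ) := by exact_mod_cast hk1
    positivity
  have htmono : ∀ i j : ℕ, i ≤ j → t i ≤ t j := by
    intro i j hij
    rw [htval, htval]
    have : (i:ℝ) ≤ (j:ℝ) := by exact_mod_cast hij
    nlinarith
  set g : ℝ → ℝ := fun s => (t k - s) ^ (α - 1) with hg
  have hgoal : (∫ s in (0:ℝ)..t k, f s * (t k - s) ^ (α - 1))
      = ∫ s in (0:ℝ)..t k, f s * g s := rfl
  rw [hgoal]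
  have hgint : ∀ a c : ℝ, IntervalIntegrable g volume a c := by
    intro a c
    have h1 : IntervalIntegrable (fun x : ℝ => x ^ (α - 1)) volume (t k - a) (t k - c) :=
      intervalIntegrable_rpow' (by linarith)
    have := h1.comp_sub_left (t k)
    simpa [hg] using this
  have hfgint : ∀ a c : ℝ, a ∈ Set.Icc (0:ℝ) T → c ∈ Set.Icc (0:ℝ) T →
      IntervalIntegrable (fun s => f s * g s) volume a c := by
    intro a c ha hc
    exact (hgint a c).continuousOn_mul (hfc.mono (Set.uIcc_subset_Icc ha hc))
  have hgval : ∀ a c : ℝ, (∫ s in a..c, g s) =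
      ((t k - a) ^ α - (t k - c) ^ α) / α := by
    intro a c
    have h1 : (∫ s in a..c, g s) = ∫ x in (t k - c)..(t k - a), x ^ (α - 1) :=
      integral_comp_sub_left (fun x => x ^ (α - 1)) (t k)
    rw [h1, integral_rpow (Or.inl (by linarith : (-1:ℝ) < α - 1))]
    norm_num
  set A : ℕ → ℝ := fun i => (f (t (i+1)) + f (t i)) / 2 with hA
  have hmemi : ∀ i : ℕ, i ≤ k → t i ∈ Set.Icc (0:ℝ) T := fun i hi => htmem i (le_trans hi hkn)
  -- reindex the quadrature sum
  have hreflect : ∑ j ∈ Finset.range k, b j * ((f (t (k-j)) + f (t (k-j-1)))/2)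
      = ∑ i ∈ Finset.range k, b (k-1-i) * A i := by
    rw [← Finset.sum_range_reflect (fun j => b j * ((f (t (k-j)) + f (t (k-j-1)))/2)) k]
    apply Finset.sum_congr rfl
    intro i hi
    have hik : i < k := Finset.mem_range.mp hi
    have e2 : k - (k-1-i) - 1 = i := by omega
    have e1 : k - (k-1-i) = i+1 := by omega
    simp only [e2, e1, hA, Nat.add_sub_cancel]
  have hQ : (τ^α / Real.Gamma (α+1)) *
        ∑ j ∈ Finset.range k, b j * ((f (t (k-j)) + f (t (k-j-1)))/2)
      = (1/Real.Gamma α) * ∑ i ∈ Finset.range k, A i * ∫ s in t i..t (i+1), g s := by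
    rw [hreflect, Finset.mul_sum, Finset.mul_sum]
    apply Finset.sum_congr rfl
    intro i hi
    have hik : i < k := Finset.mem_range.mp hi
    have hki : (i:ℝ) + 1 ≤ (k:ℝ) := by exact_mod_cast hik
    have hmcast : ((k - 1 - i : ℕ) : ℝ) = (k:ℝ) - 1 - (i:ℝ) := by
      have h := congrArg (Nat.cast : ℕ → ℝ) (by omega : k - 1 - i + (i + 1) = k)
      push_cast at h
      linarith
    have hbv : b (k-1-i) = ((k:ℝ) - 1 - i + 1)^α - ((k:ℝ) - 1 - i)^α := by
      rw [hb, hmcast]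
    have hint1 : t k - t i = ((k:ℝ) - 1 - i + 1) * τ := by
      rw [htval, htval]; ring
    have hint2 : t k - t (i+1) = ((k:ℝ) - 1 - i) * τ := by
      rw [htval, htval]; push_cast; ring
    have hbval : τ^α * b (k-1-i) = (t k - t i)^α - (t k - t (i+1))^α := by
      rw [hbv, hint1, hint2, Real.mul_rpow (by linarith) hτpos.le,
        Real.mul_rpow (by linarith) hτpos.le]
      ring
    rw [hgval (t i) (t (i+1)), ← hbval, hΓ1]
    field_simp
  -- split the integral
  have hsplit : (∫ s in (0:ℝ)..t k, f s * g s)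
      = ∑ i ∈ Finset.range k, ∫ s in t i..t (i+1), f s * g s := by
    have hadj : ∑ i ∈ Finset.range k, ∫ s in t i..t (i+1), f s * g s
        = ∫ s in (t 0)..(t k), f s * g s :=
      intervalIntegral.sum_integral_adjacent_intervals
        (fun i hi => hfgint (t i) (t (i+1)) (hmemi i (by omega)) (hmemi (i+1) (by omega)))
    rw [ht0] at hadj
    exact hadj.symm
  -- per-interval error estimate
  have key : ∀ i, i < k →
      |(∫ s in t i..t (i+1), f s * g s) - A i * ∫ s in t i..t (i+1), g s|
      ≤ (M * τ) * ∫ s in t i..t (i+1), g s := by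
    intro i hik
    have hti : t i ∈ Set.Icc (0:ℝ) T := hmemi i (by omega)
    have hti1 : t (i+1) ∈ Set.Icc (0:ℝ) T := hmemi (i+1) (by omega)
    have hstep : t (i+1) - t i = τ := by rw [htval, htval]; push_cast; ring
    have hle : t i ≤ t (i+1) := by linarith
    have hle2 : t (i+1) ≤ t k := htmono _ _ (by omega)
    have e1 : (∫ s in t i..t (i+1), f s * g s) - A i * ∫ s in t i..t (i+1), g s
        = ∫ s in t i..t (i+1), (f s - A i) * g s := by
      rw [← intervalIntegral.integral_const_mul]
      rw [← intervalIntegral.integral_sub (hfgint _ _ hti hti1)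
        ((hgint (t i) (t (i+1))).const_mul _)]
      congr 1
      ext s
      ring
    rw [e1]
    have hbound : ∀ s ∈ Set.uIoc (t i) (t (i+1)), ‖(f s - A i) * g s‖ ≤ (M*τ) * g s := by
      intro s hs
      rw [Set.uIoc_of_le hle] at hs
      have hs0 : s ∈ Set.Icc (0:ℝ) T := ⟨le_trans hti.1 hs.1.le, le_trans hs.2 hti1.2⟩
      have h1 : |f s - f (t i)| ≤ M * τ := by
        refine le_trans (hLip (t i) hti s hs0) ?_
        have h : |s - t i| ≤ τ := by
          rw [abs_of_nonneg (by linarith [hs.1])]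
          linarith [hs.2]
        nlinarith
      have h2 : |f s - f (t (i+1))| ≤ M * τ := by
        refine le_trans (hLip (t (i+1)) hti1 s hs0) ?_
        have h : |s - t (i+1)| ≤ τ := by
          rw [abs_of_nonpos (by linarith [hs.2])]
          linarith [hs.1]
        nlinarith
      have hfA : |f s - A i| ≤ M * τ := by
        have he : f s - A i = ((f s - f (t i)) + (f s - f (t (i+1)))) / 2 := by
          simp only [hA]; ring
        rw [he]
        calc |((f s - f (t i)) + (f s - f (t (i+1)))) / 2|
            ≤ (|f s - f (t i)| + |f s - f (t (i+1))|) / 2 := by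
              rw [abs_div, abs_two]
              gcongr
              exact abs_add_le _ _
          _ ≤ (M*τ + M*τ)/2 := by gcongr
          _ = M*τ := by ring
      have hgs : 0 ≤ g s := Real.rpow_nonneg (by linarith [hs.2]) _
      rw [Real.norm_eq_abs, abs_mul, abs_of_nonneg hgs]
      exact mul_le_mul_of_nonneg_right hfA hgs
    have hJnn : 0 ≤ ∫ s in t i..t (i+1), g s :=
      intervalIntegral.integral_nonneg hle
        (fun u hu => Real.rpow_nonneg (by linarith [hu.2]) _)
    have hnorm := intervalIntegral.norm_integral_le_abs_of_norm_le
      (ae_restrict_of_forall_mem measurableSet_uIoc hbound)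
      ((hgint (t i) (t (i+1))).const_mul (M*τ))
    rw [intervalIntegral.integral_const_mul, Real.norm_eq_abs] at hnorm
    refine le_trans hnorm ?_
    rw [abs_of_nonneg (mul_nonneg (mul_nonneg hM0 hτpos.le) hJnn)]
  -- sum of the subinterval integrals of g
  have hsumJ : ∑ i ∈ Finset.range k, (∫ s in t i..t (i+1), g s) = (t k)^α / α := by
    have hadj : ∑ i ∈ Finset.range k, ∫ s in t i..t (i+1), g s
        = ∫ s in (t 0)..(t k), g s :=
      intervalIntegral.sum_integral_adjacent_intervals (fun i _ => hgint (t i) (t (i+1)))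
    rw [hadj, ht0, hgval]
    rw [sub_zero, sub_self, Real.zero_rpow hα0.ne', sub_zero]
  -- put everything together
  have hdiff : (1 / Real.Gamma α) * (∫ s in (0:ℝ)..t k, f s * g s) -
      (τ ^ α / Real.Gamma (α + 1)) *
        ∑ j ∈ Finset.range k, b j * ((f (t (k - j)) + f (t (k - j - 1))) / 2)
      = (1 / Real.Gamma α) * ∑ i ∈ Finset.range k,
          ((∫ s in t i..t (i+1), f s * g s) - A i * ∫ s in t i..t (i+1), g s) := by
    rw [hsplit, hQ, ← mul_sub, ← Finset.sum_sub_distrib]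
  rw [hdiff, abs_mul, abs_of_nonneg (by positivity : (0:ℝ) ≤ 1/Real.Gamma α)]
  have h1 : |∑ i ∈ Finset.range k,
        ((∫ s in t i..t (i+1), f s * g s) - A i * ∫ s in t i..t (i+1), g s)|
      ≤ ∑ i ∈ Finset.range k, (M*τ) * ∫ s in t i..t (i+1), g s :=
    le_trans (Finset.abs_sum_le_sum_abs _ _)
      (Finset.sum_le_sum (fun i hi => key i (Finset.mem_range.mp hi)))
  refine le_trans (mul_le_mul_of_nonneg_left h1 (by positivity)) ?_
  rw [← Finset.mul_sum, hsumJ]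
  apply le_of_eq
  rw [hΓ1]
  field_simp
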